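/- Let E be a directed graph and A = KE its path algebra over a field K. Then the left socle of A equals the direct sum ⊕_{v ∈ Source(E)} vA, i.e., the two-sided ideal generated by the sources of E, and the right socle equals ⊕_{v ∈ Sink(E)} Av, the two-sided ideal generated by the sinks. -/

import Mathlib

/-- A directed graph: vertices, edges, source and range maps. -/
structure DGraph : Type 1 where
  V : Type
  Edge : Type
  s : Edge → V
  r : Edge → V

namespace DGraph

/-- A list of edges is composable if consecutive edges match up. -/
def IsComposable (G : DGraph) (l : List G.Edge) : Prop :=
  l.Chain' (fun e f => G.r e = G.s f)

/-- A path in `G`: either a trivial path at a vertex, or a nonempty composable list of edges. -/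
def GPath (G : DGraph) : Type :=
  G.V ⊕ {l : List G.Edge // l ≠ [] ∧ G.IsComposable l}

namespace GPath

variable {G : DGraph}

/-- The source of a path. -/
def src : GPath G → G.V
  | Sum.inl v => v
  | Sum.inr l => G.s (l.1.head l.2.1)

/-- The range of a path. -/
def rng : GPath G → G.V
  | Sum.inl v => v
  | Sum.inr l => G.r (l.1.getLast l.2.1)

/-- The length of a path. -/
def length : GPath G → ℕ
  | Sum.inl _ => 0
  | Sum.inr l => l.1.length

/-- The trivial path at a vertex. -/
def ofVertex (v : G.V) : GPath G := Sum.inl v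

/-- The length-one path given by an edge. -/
def ofEdge (e : G.Edge) : GPath G :=
  Sum.inr ⟨[e], by simp [IsComposable, List.Chain', List.isChain_singleton]⟩

/-- Concatenation of composable paths. -/
def comp : (p q : GPath G) → p.rng = q.src → GPath G
  | Sum.inl _, q, _ => q
  | Sum.inr l, Sum.inl _, _ => Sum.inr l
  | Sum.inr l, Sum.inr m, h => Sum.inr ⟨l.1 ++ m.1, by
      refine ⟨by simp [l.2.1], l.2.2.append m.2.2 ?_⟩
      intro x hx y hy
      rw [List.getLast?_eq_some_getLast l.2.1] at hx
      rw [List.head?_eq_head m.2.1] at hy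
      cases hx
      cases hy
      exact h⟩

end GPath

end DGraph

open DGraph

/-- A realization of the path algebra of the graph `G` over the field `K`:
a `K`-algebra with a basis indexed by the paths of `G`, multiplying by concatenation. -/
structure PathAlgebraOn (K : Type) [Field K] (G : DGraph) (A : Type)
    [NonUnitalRing A] [Module K A] where
  basis : Module.Basis (GPath G) K A
  mul_comp : ∀ (p q : GPath G) (h : p.rng = q.src),
      basis p * basis q = basis (p.comp q h)
  mul_ncomp : ∀ p q : GPath G, p.rng ≠ q.src → basis p * basis q = 0

/-- A `K`-subspace of `A` which is a left ideal. -/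
def IsLeftIdeal (K : Type) [Field K] (A : Type) [NonUnitalRing A] [Module K A]
    (S : Submodule K A) : Prop :=
  ∀ a : A, ∀ x ∈ S, a * x ∈ S

/-- A `K`-subspace of `A` which is a right ideal. -/
def IsRightIdeal (K : Type) [Field K] (A : Type) [NonUnitalRing A] [Module K A]
    (S : Submodule K A) : Prop :=
  ∀ a : A, ∀ x ∈ S, x * a ∈ S

/-- The descending chain condition on left ideals. -/
def IsLeftArtinianAlg (K : Type) [Field K] (A : Type) [NonUnitalRing A] [Module K A] : Prop :=
  ∀ f : ℕ → Submodule K A, (∀ m, IsLeftIdeal K A (f m)) → (∀ m, f (m + 1) ≤ f m) →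
    ∃ m, ∀ l, m ≤ l → f l = f m

/-- The ascending chain condition on left ideals. -/
def IsLeftNoetherianAlg (K : Type) [Field K] (A : Type) [NonUnitalRing A] [Module K A] : Prop :=
  ∀ f : ℕ → Submodule K A, (∀ m, IsLeftIdeal K A (f m)) → (∀ m, f m ≤ f (m + 1)) →
    ∃ m, ∀ l, m ≤ l → f l = f m

/-- A minimal left ideal: nonzero, and containing no nonzero proper left subideal. -/
def IsMinimalLeftIdeal (K : Type) [Field K] (A : Type) [NonUnitalRing A] [Module K A]
    (S : Submodule K A) : Prop :=
  IsLeftIdeal K A S ∧ S ≠ ⊥ ∧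
    ∀ T : Submodule K A, IsLeftIdeal K A T → T ≤ S → T = ⊥ ∨ T = S

/-- A minimal right ideal. -/
def IsMinimalRightIdeal (K : Type) [Field K] (A : Type) [NonUnitalRing A] [Module K A]
    (S : Submodule K A) : Prop :=
  IsRightIdeal K A S ∧ S ≠ ⊥ ∧
    ∀ T : Submodule K A, IsRightIdeal K A T → T ≤ S → T = ⊥ ∨ T = S


namespace Stmt11Aux
open DGraph GPath

variable {G : DGraph}

attribute [local instance] Classical.propDecidable

lemma src_ofVertex (v : G.V) : (ofVertex v : GPath G).src = v := rfl
lemma rng_ofVertex (v : G.V) : (ofVertex v : GPath G).rng = v := rfl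
lemma src_ofEdge (e : G.Edge) : (ofEdge e : GPath G).src = G.s e := rfl
lemma rng_ofEdge (e : G.Edge) : (ofEdge e : GPath G).rng = G.r e := rfl

lemma inr_eq {l l' : List G.Edge} (hl : l ≠ [] ∧ G.IsComposable l)
    (hl' : l' ≠ [] ∧ G.IsComposable l') (h : l = l') :
    (Sum.inr ⟨l, hl⟩ : GPath G) = Sum.inr ⟨l', hl'⟩ := by subst h; rfl

lemma length_comp (p q : GPath G) (h : p.rng = q.src) :
    (p.comp q h).length = p.length + q.length := by
  rcases p with v | l
  · simp [comp, length]
  · rcases q with w | m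
    · simp [comp, length]
    · simp [comp, length]

lemma src_comp (p q : GPath G) (h : p.rng = q.src) :
    (p.comp q h).src = p.src := by
  rcases p with v | l
  · exact h.symm
  · rcases q with w | m
    · rfl
    · show G.s ((l.1 ++ m.1).head _) = _
      rw [List.head_append_of_ne_nil l.2.1]
      rfl

lemma rng_comp (p q : GPath G) (h : p.rng = q.src) :
    (p.comp q h).rng = q.rng := by
  rcases p with v | l
  · rfl
  · rcases q with w | m
    · exact h
    · show G.r ((l.1 ++ m.1).getLast _) = _
      rw [List.getLast_append]
      simp [m.2.1]
      rfl

lemma comp_inl (v : G.V) (q : GPath G) (h) : comp (Sum.inl v : GPath G) q h = q := rfl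

lemma ofEdge_comp_inr (e : G.Edge) (m : List G.Edge) (hm) (h) :
    (ofEdge e : GPath G).comp (Sum.inr ⟨m, hm⟩) h =
      Sum.inr ⟨e :: m, List.cons_ne_nil _ _, by
        refine List.isChain_cons.mpr ⟨?_, hm.2⟩
        intro y hy
        rw [List.head?_eq_head hm.1] at hy
        cases hy
        exact h⟩ := rfl

lemma comp_inr_ofEdge (e : G.Edge) (l : List G.Edge) (hl) (h) :
    comp (Sum.inr ⟨l, hl⟩ : GPath G) (ofEdge e) h =
      Sum.inr ⟨l ++ [e], by
        refine ⟨by simp, List.isChain_append.mpr ⟨hl.2, List.isChain_singleton _, ?_⟩⟩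
        intro x hx y hy
        rw [List.getLast?_eq_getLast hl.1] at hx
        cases hx
        cases hy
        exact h⟩ := rfl

/-- Remove the first edge `e` from a path, if it indeed starts with `e`. -/
noncomputable def detach (e : G.Edge) (q : GPath G) : Option (GPath G) :=
  match q with
  | Sum.inl _ => none
  | Sum.inr ⟨l, hl⟩ =>
    match l, hl with
    | [e'], _ => if e' = e then some (Sum.inl (G.r e)) else none
    | e' :: f :: m, hl =>
      if e' = e then some (Sum.inr ⟨f :: m, List.cons_ne_nil _ _, hl.2.tail⟩) else none

lemma detach_inl (e : G.Edge) (v : G.V) : detach e (Sum.inl v : GPath G) = none := rfl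

lemma detach_single (e e' : G.Edge) (hl) :
    detach e (Sum.inr ⟨[e'], hl⟩ : GPath G) =
      if e' = e then some (Sum.inl (G.r e)) else none := rfl

lemma detach_cons (e e' f : G.Edge) (m : List G.Edge) (hl) :
    detach e (Sum.inr ⟨e' :: f :: m, hl⟩ : GPath G) =
      if e' = e then some (Sum.inr ⟨f :: m, List.cons_ne_nil _ _, hl.2.tail⟩)
      else none := rfl

lemma detach_comp (e : G.Edge) (p : GPath G) (h : (ofEdge e : GPath G).rng = p.src) :
    detach e ((ofEdge e).comp p h) = some p := by
  rcases p with w | ⟨⟨_ | ⟨f, m⟩, hm⟩⟩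
  · show detach e (Sum.inr ⟨[e], _⟩) = _
    rw [detach_single, if_pos rfl]
    exact congrArg some (congrArg Sum.inl h)
  · exact absurd rfl hm.1
  · rw [ofEdge_comp_inr, detach_cons, if_pos rfl]
    rfl

lemma detach_eq_some {e : G.Edge} {q p : GPath G} (hd : detach e q = some p) :
    ∃ h : (ofEdge e : GPath G).rng = p.src, (ofEdge e).comp p h = q := by
  rcases q with w | ⟨⟨_ | ⟨e', _ | ⟨f, m⟩⟩, hl⟩⟩
  · rw [detach_inl] at hd; cases hd
  · exact absurd rfl hl.1
  · rw [detach_single] at hd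
    split at hd
    · replace hd := Option.some.inj hd
      subst hd
      subst ‹e' = e›
      exact ⟨rfl, rfl⟩
    · cases hd
  · rw [detach_cons] at hd
    split at hd
    · replace hd := Option.some.inj hd
      subst hd
      subst ‹e' = e›
      exact ⟨(List.isChain_cons_cons.mp hl.2).1, rfl⟩
    · cases hd

/-- Remove the last edge `e` from a path, if it indeed ends with `e`. -/
noncomputable def detachR (e : G.Edge) (q : GPath G) : Option (GPath G) :=
  match q with
  | Sum.inl _ => none
  | Sum.inr ⟨l, hl⟩ =>
    if l.getLast hl.1 = e then
      some (if h : l.dropLast = [] then Sum.inl (G.s e)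
        else Sum.inr ⟨l.dropLast, h, hl.2.prefix (List.dropLast_prefix l)⟩)
    else none

lemma detachR_inl (e : G.Edge) (v : G.V) : detachR e (Sum.inl v : GPath G) = none := rfl

lemma detachR_inr (e : G.Edge) (l : List G.Edge) (hl) :
    detachR e (Sum.inr ⟨l, hl⟩ : GPath G) =
      if l.getLast hl.1 = e then
        some (if h : l.dropLast = [] then Sum.inl (G.s e)
          else Sum.inr ⟨l.dropLast, h, hl.2.prefix (List.dropLast_prefix l)⟩)
      else none := rfl

lemma detachR_comp (e : G.Edge) (p : GPath G) (h : p.rng = (ofEdge e : GPath G).src) :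
    detachR e (p.comp (ofEdge e) h) = some p := by
  rcases p with w | ⟨⟨l, hl⟩⟩
  · have hw : w = G.s e := h
    subst hw
    show detachR e (Sum.inr ⟨[e], _⟩) = _
    rw [detachR_inr]
    split
    · split
      · rfl
      · exact absurd rfl ‹¬_›
    · exact absurd rfl ‹¬_›
  · rw [comp_inr_ofEdge, detachR_inr]
    split
    · split
      · exfalso
        have := List.dropLast_concat (l₁ := l) (b := e)
        simp_all
      · refine congrArg some (inr_eq _ _ ?_)
        exact List.dropLast_concat
    · exfalso
      apply ‹¬_›
      rw [List.getLast_append]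
      simp

lemma detachR_eq_some {e : G.Edge} {q p : GPath G} (hd : detachR e q = some p) :
    ∃ h : p.rng = (ofEdge e : GPath G).src, p.comp (ofEdge e) h = q := by
  rcases q with w | ⟨⟨l, hl⟩⟩
  · rw [detachR_inl] at hd; cases hd
  · rw [detachR_inr] at hd
    split at hd
    case isFalse => cases hd
    case isTrue he =>
      replace hd := Option.some.inj hd
      subst hd
      split
      case isTrue hdl =>
        have hle : l = [e] := by
          conv_lhs => rw [← List.dropLast_append_getLast hl.1]
          rw [hdl, he]
          rfl
        refine ⟨rfl, ?_⟩
        show (ofEdge e : GPath G) = _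
        exact inr_eq _ _ hle.symm
      case isFalse hdl =>
        have hsplit : l.dropLast ++ [e] = l := by
          conv_rhs => rw [← List.dropLast_append_getLast hl.1, he]
        have hcomp : G.IsComposable (l.dropLast ++ [e]) := by rw [hsplit]; exact hl.2
        replace hcomp := List.isChain_append.mp hcomp
        have hrel := hcomp.2.2 (l.dropLast.getLast hdl)
          (by simp [List.getLast?_eq_getLast hdl]) e rfl
        refine ⟨hrel, ?_⟩
        rw [comp_inr_ofEdge]
        exact inr_eq _ _ hsplit

lemma length_detach {e : G.Edge} {q p : GPath G} (hd : detach e q = some p) :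
    q.length = p.length + 1 := by
  obtain ⟨h, rfl⟩ := detach_eq_some hd
  rw [length_comp]
  have : (ofEdge e : GPath G).length = 1 := rfl
  omega

lemma length_detachR {e : G.Edge} {q p : GPath G} (hd : detachR e q = some p) :
    q.length = p.length + 1 := by
  obtain ⟨h, rfl⟩ := detachR_eq_some hd
  rw [length_comp]
  rfl

end Stmt11Aux

section Alg

open DGraph GPath Stmt11Aux

variable {K : Type} [Field K] {G : DGraph} {A : Type}
  [NonUnitalRing A] [Module K A] [SMulCommClass K A A] [IsScalarTower K A A]
  (PA : PathAlgebraOn K G A)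

attribute [local instance] Classical.propDecidable

lemma mem_top_span (a : A) : a ∈ Submodule.span K (Set.range PA.basis) := by
  rw [PA.basis.span_eq]; trivial

/-- Bilinear reduction: to show `a * x ∈ N` for `x` in the span of basis elements over `s`. -/
lemma mul_right_mem_of (N : Submodule K A) {s : Set (GPath G)}
    (h : ∀ p q, q ∈ s → PA.basis p * PA.basis q ∈ N)
    (a : A) (x : A) (hx : x ∈ Submodule.span K (PA.basis '' s)) : a * x ∈ N := by
  induction hx using Submodule.span_induction with
  | mem y hy =>
    obtain ⟨q, hq, rfl⟩ := hy
    induction mem_top_span PA a using Submodule.span_induction with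
    | mem b hb => obtain ⟨p, rfl⟩ := hb; exact h p q hq
    | zero => rw [zero_mul]; exact N.zero_mem
    | add b c _ _ ihb ihc => rw [add_mul]; exact N.add_mem ihb ihc
    | smul k b _ ih => rw [smul_mul_assoc]; exact N.smul_mem _ ih
  | zero => rw [mul_zero]; exact N.zero_mem
  | add y z _ _ ihy ihz => rw [mul_add]; exact N.add_mem ihy ihz
  | smul k y _ ih => rw [mul_smul_comm]; exact N.smul_mem _ ih

lemma mul_left_mem_of (N : Submodule K A) {s : Set (GPath G)}
    (h : ∀ p q, p ∈ s → PA.basis p * PA.basis q ∈ N)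
    (a : A) (x : A) (hx : x ∈ Submodule.span K (PA.basis '' s)) : x * a ∈ N := by
  induction hx using Submodule.span_induction with
  | mem y hy =>
    obtain ⟨p, hp, rfl⟩ := hy
    induction mem_top_span PA a using Submodule.span_induction with
    | mem b hb => obtain ⟨q, rfl⟩ := hb; exact h p q hp
    | zero => rw [mul_zero]; exact N.zero_mem
    | add b c _ _ ihb ihc => rw [mul_add]; exact N.add_mem ihb ihc
    | smul k b _ ih => rw [mul_smul_comm]; exact N.smul_mem _ ih
  | zero => rw [zero_mul]; exact N.zero_mem
  | add y z _ _ ihy ihz => rw [add_mul]; exact N.add_mem ihy ihz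
  | smul k y _ ih => rw [smul_mul_assoc]; exact N.smul_mem _ ih

lemma vertex_mul (v : G.V) (p : GPath G) :
    PA.basis (ofVertex v) * PA.basis p = if p.src = v then PA.basis p else 0 := by
  by_cases h : p.src = v
  · rw [if_pos h, PA.mul_comp (ofVertex v) p h.symm]
    exact congrArg _ (comp_inl v p h.symm)
  · rw [if_neg h]
    exact PA.mul_ncomp _ _ (fun hc => h hc.symm)

lemma mul_vertex (p : GPath G) (v : G.V) :
    PA.basis p * PA.basis (ofVertex v) = if p.rng = v then PA.basis p else 0 := by
  by_cases h : p.rng = v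
  · rw [if_pos h, PA.mul_comp p (ofVertex v) h]
    refine congrArg _ ?_
    rcases p with w | l
    · show (ofVertex v : GPath G) = Sum.inl w
      exact congrArg Sum.inl h.symm
    · rfl
  · rw [if_neg h]
    exact PA.mul_ncomp _ _ h

lemma repr_vertex_mul (v : G.V) (x : A) (q : GPath G) :
    PA.basis.repr (PA.basis (ofVertex v) * x) q =
      if q.src = v then PA.basis.repr x q else 0 := by
  induction mem_top_span PA x using Submodule.span_induction with
  | mem y hy =>
    obtain ⟨p, rfl⟩ := hy
    rw [vertex_mul]
    by_cases h : p.src = v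
    · rw [if_pos h, PA.basis.repr_self]
      by_cases hq : q.src = v
      · rw [if_pos hq]
      · rw [if_neg hq, Finsupp.single_apply, if_neg]
        rintro rfl
        exact hq h
    · rw [if_neg h, map_zero, Finsupp.zero_apply, PA.basis.repr_self]
      by_cases hq : q.src = v
      · rw [if_pos hq, Finsupp.single_apply, if_neg]
        rintro rfl
        exact h hq
      · rw [if_neg hq]
  | zero => simp
  | add y z _ _ ihy ihz =>
    rw [mul_add, map_add, Finsupp.add_apply, ihy, ihz, map_add, Finsupp.add_apply]
    split <;> simp
  | smul k y _ ih =>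
    rw [mul_smul_comm, map_smul, Finsupp.smul_apply, ih, map_smul, Finsupp.smul_apply]
    split <;> simp

lemma repr_mul_vertex (v : G.V) (x : A) (q : GPath G) :
    PA.basis.repr (x * PA.basis (ofVertex v)) q =
      if q.rng = v then PA.basis.repr x q else 0 := by
  induction mem_top_span PA x using Submodule.span_induction with
  | mem y hy =>
    obtain ⟨p, rfl⟩ := hy
    rw [mul_vertex]
    by_cases h : p.rng = v
    · rw [if_pos h, PA.basis.repr_self]
      by_cases hq : q.rng = v
      · rw [if_pos hq]
      · rw [if_neg hq, Finsupp.single_apply, if_neg]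
        rintro rfl
        exact hq h
    · rw [if_neg h, map_zero, Finsupp.zero_apply, PA.basis.repr_self]
      by_cases hq : q.rng = v
      · rw [if_pos hq, Finsupp.single_apply, if_neg]
        rintro rfl
        exact h hq
      · rw [if_neg hq]
  | zero => simp
  | add y z _ _ ihy ihz =>
    rw [add_mul, map_add, Finsupp.add_apply, ihy, ihz, map_add, Finsupp.add_apply]
    split <;> simp
  | smul k y _ ih =>
    rw [smul_mul_assoc, map_smul, Finsupp.smul_apply, ih, map_smul, Finsupp.smul_apply]
    split <;> simp

lemma repr_edge_mul (e : G.Edge) (x : A) (q : GPath G) :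
    PA.basis.repr (PA.basis (ofEdge e) * x) q =
      ((detach e q).map (PA.basis.repr x)).getD 0 := by
  induction mem_top_span PA x using Submodule.span_induction with
  | mem y hy =>
    obtain ⟨p, rfl⟩ := hy
    by_cases h : (ofEdge e : GPath G).rng = p.src
    · rw [PA.mul_comp _ _ h, PA.basis.repr_self, PA.basis.repr_self]
      by_cases hq : q = (ofEdge e).comp p h
      · subst hq
        rw [detach_comp, Finsupp.single_apply, if_pos rfl]
        simp [Finsupp.single_apply]
      · rw [Finsupp.single_apply, if_neg (fun hh => hq hh.symm)]
        cases hd : detach e q with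
        | none => rfl
        | some p' =>
          obtain ⟨h', rfl⟩ := detach_eq_some hd
          simp only [Option.map_some, Option.getD_some, Finsupp.single_apply]
          rw [if_neg]
          rintro rfl
          exact hq rfl
    · rw [PA.mul_ncomp _ _ h, map_zero, Finsupp.zero_apply, PA.basis.repr_self]
      cases hd : detach e q with
      | none => rfl
      | some p' =>
        obtain ⟨h', rfl⟩ := detach_eq_some hd
        simp only [Option.map_some, Option.getD_some, Finsupp.single_apply]
        rw [if_neg]
        rintro rfl
        exact h h'
  | zero =>
    rw [mul_zero, map_zero]
    cases hd : detach e q <;> simp [hd]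
  | add y z _ _ ihy ihz =>
    rw [mul_add, map_add, Finsupp.add_apply, ihy, ihz, map_add]
    cases hd : detach e q <;> simp [hd]
  | smul k y _ ih =>
    rw [mul_smul_comm, map_smul, Finsupp.smul_apply, ih, map_smul]
    cases hd : detach e q <;> simp [hd]

lemma repr_mul_edge (e : G.Edge) (x : A) (q : GPath G) :
    PA.basis.repr (x * PA.basis (ofEdge e)) q =
      ((detachR e q).map (PA.basis.repr x)).getD 0 := by
  induction mem_top_span PA x using Submodule.span_induction with
  | mem y hy =>
    obtain ⟨p, rfl⟩ := hy
    by_cases h : p.rng = (ofEdge e : GPath G).src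
    · rw [PA.mul_comp _ _ h, PA.basis.repr_self, PA.basis.repr_self]
      by_cases hq : q = p.comp (ofEdge e) h
      · subst hq
        rw [detachR_comp, Finsupp.single_apply, if_pos rfl]
        simp [Finsupp.single_apply]
      · rw [Finsupp.single_apply, if_neg (fun hh => hq hh.symm)]
        cases hd : detachR e q with
        | none => rfl
        | some p' =>
          obtain ⟨h', rfl⟩ := detachR_eq_some hd
          simp only [Option.map_some, Option.getD_some, Finsupp.single_apply]
          rw [if_neg]
          rintro rfl
          exact hq rfl
    · rw [PA.mul_ncomp _ _ h, map_zero, Finsupp.zero_apply, PA.basis.repr_self]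
      cases hd : detachR e q with
      | none => rfl
      | some p' =>
        obtain ⟨h', rfl⟩ := detachR_eq_some hd
        simp only [Option.map_some, Option.getD_some, Finsupp.single_apply]
        rw [if_neg]
        rintro rfl
        exact h h'
  | zero =>
    rw [zero_mul, map_zero]
    cases hd : detachR e q <;> simp [hd]
  | add y z _ _ ihy ihz =>
    rw [add_mul, map_add, Finsupp.add_apply, ihy, ihz, map_add]
    cases hd : detachR e q <;> simp [hd]
  | smul k y _ ih =>
    rw [smul_mul_assoc, map_smul, Finsupp.smul_apply, ih, map_smul]
    cases hd : detachR e q <;> simp [hd]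

end Alg

section Alg2

open DGraph GPath Stmt11Aux

variable {K : Type} [Field K] {G : DGraph} {A : Type}
  [NonUnitalRing A] [Module K A] [SMulCommClass K A A] [IsScalarTower K A A]
  (PA : PathAlgebraOn K G A)

attribute [local instance] Classical.propDecidable

set_option linter.unusedSectionVars false

/-- The span of the basis paths of length at least `n`. -/
def Lstep (n : ℕ) : Submodule K A :=
  Submodule.span K (PA.basis '' {p : GPath G | n ≤ p.length})

lemma Lstep_zero : Lstep PA 0 = ⊤ := by
  have h : {p : GPath G | 0 ≤ p.length} = Set.univ := by ext; simp
  rw [Lstep, h, Set.image_univ, PA.basis.span_eq]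

lemma mul_basis_mem_Lstep (n : ℕ) (p q : GPath G)
    (h : n ≤ p.length ∨ n ≤ q.length) :
    PA.basis p * PA.basis q ∈ Lstep PA n := by
  by_cases hc : p.rng = q.src
  · rw [PA.mul_comp p q hc]
    refine Submodule.subset_span ⟨p.comp q hc, ?_, rfl⟩
    rw [Set.mem_setOf_eq, length_comp]
    omega
  · rw [PA.mul_ncomp p q hc]
    exact (Lstep PA n).zero_mem

lemma Lstep_leftIdeal (n : ℕ) : IsLeftIdeal K A (Lstep PA n) :=
  fun a x hx => mul_right_mem_of PA _ (fun p q hq => mul_basis_mem_Lstep PA n p q (Or.inr hq)) a x hx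

lemma Lstep_rightIdeal (n : ℕ) : IsRightIdeal K A (Lstep PA n) :=
  fun a x hx => mul_left_mem_of PA _ (fun p q hp => mul_basis_mem_Lstep PA n p q (Or.inl hp)) a x hx

lemma basis_mul_mem_span_singleL (p : GPath G) (hp : ∀ e : G.Edge, G.r e ≠ p.src)
    (p' q : GPath G) (hq : q ∈ ({p} : Set (GPath G))) :
    PA.basis p' * PA.basis q ∈ Submodule.span K {PA.basis p} := by
  cases hq
  by_cases h : p'.rng = p.src
  · rcases p' with w | l
    · rw [PA.mul_comp _ _ h, comp_inl]
      exact Submodule.mem_span_singleton_self _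
    · exact absurd h (hp _)
  · rw [PA.mul_ncomp _ _ h]
    exact Submodule.zero_mem _

lemma basis_mul_mem_span_singleR (p : GPath G) (hp : ∀ e : G.Edge, G.s e ≠ p.rng)
    (q p' : GPath G) (hq : q ∈ ({p} : Set (GPath G))) :
    PA.basis q * PA.basis p' ∈ Submodule.span K {PA.basis p} := by
  cases hq
  by_cases h : p.rng = p'.src
  · rcases p' with w | l
    · rw [PA.mul_comp _ _ h]
      rcases p with u | m
      · show PA.basis (Sum.inl w : GPath G) ∈ Submodule.span K {PA.basis (Sum.inl u : GPath G)}
        have : u = w := h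
        subst this
        exact Submodule.mem_span_singleton_self _
      · exact Submodule.mem_span_singleton_self _
    · exact absurd h.symm (hp _)
  · rw [PA.mul_ncomp _ _ h]
    exact Submodule.zero_mem _

lemma span_single_ne_bot (p : GPath G) :
    Submodule.span K {PA.basis p} ≠ ⊥ := by
  rw [ne_eq, Submodule.span_singleton_eq_bot]
  exact PA.basis.ne_zero p

lemma span_single_min (p : GPath G) (T : Submodule K A)
    (hT : T ≤ Submodule.span K {PA.basis p}) :
    T = ⊥ ∨ T = Submodule.span K {PA.basis p} := by
  by_cases hbot : T = ⊥
  · exact Or.inl hbot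
  · right
    refine le_antisymm hT ?_
    obtain ⟨x, hxT, hx0⟩ := (Submodule.ne_bot_iff T).mp hbot
    obtain ⟨k, hk⟩ := Submodule.mem_span_singleton.mp (hT hxT)
    have hk0 : k ≠ 0 := by rintro rfl; rw [zero_smul] at hk; exact hx0 hk.symm
    rw [Submodule.span_singleton_le_iff_mem]
    have hx : PA.basis p = k⁻¹ • x := by
      rw [← hk, smul_smul, inv_mul_cancel₀ hk0, one_smul]
    rw [hx]
    exact T.smul_mem _ hxT

lemma left_min (p : GPath G) (hp : ∀ e : G.Edge, G.r e ≠ p.src) :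
    IsMinimalLeftIdeal K A (Submodule.span K {PA.basis p}) := by
  refine ⟨?_, span_single_ne_bot PA p, fun T _ hT => span_single_min PA p T hT⟩
  intro a x hx
  refine mul_right_mem_of PA (Submodule.span K {PA.basis p})
    (basis_mul_mem_span_singleL PA p hp) a x ?_
  rwa [Set.image_singleton]

lemma right_min (p : GPath G) (hp : ∀ e : G.Edge, G.s e ≠ p.rng) :
    IsMinimalRightIdeal K A (Submodule.span K {PA.basis p}) := by
  refine ⟨?_, span_single_ne_bot PA p, fun T _ hT => span_single_min PA p T hT⟩
  intro a x hx
  refine mul_left_mem_of PA (Submodule.span K {PA.basis p})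
    (fun q p' hq => basis_mul_mem_span_singleR PA p hp q p' hq) a x ?_
  rwa [Set.image_singleton]

lemma left_socle_le (S : Submodule K A) (hS : IsMinimalLeftIdeal K A S) :
    S ≤ Submodule.span K (PA.basis '' {p : GPath G | ∀ e : G.Edge, G.r e ≠ p.src}) := by
  obtain ⟨hSl, hSbot, hSmin⟩ := hS
  have hchain : ∀ n, S ⊓ Lstep PA n = ⊥ ∨ S ⊓ Lstep PA n = S := fun n =>
    hSmin (S ⊓ Lstep PA n)
      (fun a x hx => ⟨hSl a x hx.1, Lstep_leftIdeal PA n a x hx.2⟩) inf_le_left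
  have hex : ∃ n, S ⊓ Lstep PA n = ⊥ := by
    by_contra hne
    push_neg at hne
    have hall : ∀ n, S ≤ Lstep PA n := fun n =>
      inf_eq_left.mp ((hchain n).resolve_left (hne n))
    apply hSbot
    rw [eq_bot_iff]
    intro x hx
    have hsupp : (PA.basis.repr x).support = ∅ := by
      by_contra hsne
      obtain ⟨p, hp⟩ := Finset.nonempty_iff_ne_empty.mpr hsne
      have hmem := PA.basis.mem_span_image.mp (hall (p.length + 1) hx) hp
      rw [Set.mem_setOf_eq] at hmem
      omega
    rw [Submodule.mem_bot]
    exact (LinearEquiv.map_eq_zero_iff _).mp (Finsupp.support_eq_empty.mp hsupp)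
  have hn₀pos : Nat.find hex ≠ 0 := by
    intro h0
    apply hSbot
    have hspec := Nat.find_spec hex
    rwa [h0, Lstep_zero, inf_top_eq] at hspec
  set N := Nat.find hex - 1 with hN
  have hSL : S ≤ Lstep PA N := by
    have hne := Nat.find_min hex (m := N) (by omega)
    exact inf_eq_left.mp ((hchain _).resolve_left hne)
  have hbot : S ⊓ Lstep PA (N + 1) = ⊥ := by
    have : N + 1 = Nat.find hex := by omega
    rw [this]
    exact Nat.find_spec hex
  intro x hx
  rw [Module.Basis.mem_span_image]
  intro p hp
  rw [Finset.mem_coe, Finsupp.mem_support_iff] at hp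
  rw [Set.mem_setOf_eq]
  intro e he
  set y := PA.basis (ofVertex p.src) * x with hy
  have hyS : y ∈ S := hSl _ x hx
  have hyp : PA.basis.repr y p = PA.basis.repr x p := by
    rw [hy, repr_vertex_mul, if_pos rfl]
  set z := PA.basis (ofEdge e) * y with hz
  have hzS : z ∈ S := hSl _ y hyS
  have hzL : z ∈ Lstep PA (N + 1) := by
    rw [Lstep, Module.Basis.mem_span_image]
    intro q hq
    rw [Finset.mem_coe, Finsupp.mem_support_iff] at hq
    rw [hz, repr_edge_mul] at hq
    rw [Set.mem_setOf_eq]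
    cases hd : detach e q with
    | none => rw [hd] at hq; simp at hq
    | some p' =>
      rw [hd] at hq
      simp only [Option.map_some, Option.getD_some] at hq
      have hp'm : p' ∈ ((PA.basis.repr y).support : Set (GPath G)) :=
        Finset.mem_coe.mpr (Finsupp.mem_support_iff.mpr hq)
      have hlenp' := PA.basis.mem_span_image.mp (hSL hyS) hp'm
      rw [Set.mem_setOf_eq] at hlenp'
      have hlen := length_detach hd
      omega
  have hz0 : z = 0 := by
    have hzb : z ∈ (⊥ : Submodule K A) := hbot ▸ (Submodule.mem_inf.mpr ⟨hzS, hzL⟩)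
    simpa using hzb
  have hcomp : (ofEdge e : GPath G).rng = p.src := he
  have hcoef : PA.basis.repr z ((ofEdge e).comp p hcomp) = PA.basis.repr y p := by
    rw [hz, repr_edge_mul, detach_comp]
    rfl
  rw [hz0, map_zero, Finsupp.zero_apply, hyp] at hcoef
  exact hp hcoef.symm

lemma right_socle_le (S : Submodule K A) (hS : IsMinimalRightIdeal K A S) :
    S ≤ Submodule.span K (PA.basis '' {p : GPath G | ∀ e : G.Edge, G.s e ≠ p.rng}) := by
  obtain ⟨hSl, hSbot, hSmin⟩ := hS
  have hchain : ∀ n, S ⊓ Lstep PA n = ⊥ ∨ S ⊓ Lstep PA n = S := fun n =>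
    hSmin (S ⊓ Lstep PA n)
      (fun a x hx => ⟨hSl a x hx.1, Lstep_rightIdeal PA n a x hx.2⟩) inf_le_left
  have hex : ∃ n, S ⊓ Lstep PA n = ⊥ := by
    by_contra hne
    push_neg at hne
    have hall : ∀ n, S ≤ Lstep PA n := fun n =>
      inf_eq_left.mp ((hchain n).resolve_left (hne n))
    apply hSbot
    rw [eq_bot_iff]
    intro x hx
    have hsupp : (PA.basis.repr x).support = ∅ := by
      by_contra hsne
      obtain ⟨p, hp⟩ := Finset.nonempty_iff_ne_empty.mpr hsne
      have hmem := PA.basis.mem_span_image.mp (hall (p.length + 1) hx) hp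
      rw [Set.mem_setOf_eq] at hmem
      omega
    rw [Submodule.mem_bot]
    exact (LinearEquiv.map_eq_zero_iff _).mp (Finsupp.support_eq_empty.mp hsupp)
  have hn₀pos : Nat.find hex ≠ 0 := by
    intro h0
    apply hSbot
    have hspec := Nat.find_spec hex
    rwa [h0, Lstep_zero, inf_top_eq] at hspec
  set N := Nat.find hex - 1 with hN
  have hSL : S ≤ Lstep PA N := by
    have hne := Nat.find_min hex (m := N) (by omega)
    exact inf_eq_left.mp ((hchain _).resolve_left hne)
  have hbot : S ⊓ Lstep PA (N + 1) = ⊥ := by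
    have : N + 1 = Nat.find hex := by omega
    rw [this]
    exact Nat.find_spec hex
  intro x hx
  rw [Module.Basis.mem_span_image]
  intro p hp
  rw [Finset.mem_coe, Finsupp.mem_support_iff] at hp
  rw [Set.mem_setOf_eq]
  intro e he
  set y := x * PA.basis (ofVertex p.rng) with hy
  have hyS : y ∈ S := hSl _ x hx
  have hyp : PA.basis.repr y p = PA.basis.repr x p := by
    rw [hy, repr_mul_vertex, if_pos rfl]
  set z := y * PA.basis (ofEdge e) with hz
  have hzS : z ∈ S := hSl _ y hyS
  have hzL : z ∈ Lstep PA (N + 1) := by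
    rw [Lstep, Module.Basis.mem_span_image]
    intro q hq
    rw [Finset.mem_coe, Finsupp.mem_support_iff] at hq
    rw [hz, repr_mul_edge] at hq
    rw [Set.mem_setOf_eq]
    cases hd : detachR e q with
    | none => rw [hd] at hq; simp at hq
    | some p' =>
      rw [hd] at hq
      simp only [Option.map_some, Option.getD_some] at hq
      have hp'm : p' ∈ ((PA.basis.repr y).support : Set (GPath G)) :=
        Finset.mem_coe.mpr (Finsupp.mem_support_iff.mpr hq)
      have hlenp' := PA.basis.mem_span_image.mp (hSL hyS) hp'm
      rw [Set.mem_setOf_eq] at hlenp'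
      have hlen := length_detachR hd
      omega
  have hz0 : z = 0 := by
    have hzb : z ∈ (⊥ : Submodule K A) := hbot ▸ (Submodule.mem_inf.mpr ⟨hzS, hzL⟩)
    simpa using hzb
  have hcomp : p.rng = (ofEdge e : GPath G).src := he.symm
  have hcoef : PA.basis.repr z (p.comp (ofEdge e) hcomp) = PA.basis.repr y p := by
    rw [hz, repr_mul_edge, detachR_comp]
    rfl
  rw [hz0, map_zero, Finsupp.zero_apply, hyp] at hcoef
  exact hp hcoef.symm

end Alg2

section Alg3

open DGraph GPath Stmt11Aux

variable {K : Type} [Field K] {G : DGraph} {A : Type}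
  [NonUnitalRing A] [Module K A] [SMulCommClass K A A] [IsScalarTower K A A]
  (PA : PathAlgebraOn K G A)

attribute [local instance] Classical.propDecidable

set_option linter.unusedSectionVars false

lemma left_eq : sSup {S : Submodule K A | IsMinimalLeftIdeal K A S} =
    Submodule.span K (PA.basis '' {p : GPath G | ∀ e : G.Edge, G.r e ≠ p.src}) := by
  apply le_antisymm
  · exact sSup_le (fun S hS => left_socle_le PA S hS)
  · rw [Submodule.span_le]
    rintro _ ⟨p, hp, rfl⟩
    have h1 : Submodule.span K {PA.basis p} ≤ sSup {S : Submodule K A | IsMinimalLeftIdeal K A S} :=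
      le_sSup (left_min PA p hp)
    exact h1 (Submodule.mem_span_singleton_self _)

lemma right_eq : sSup {S : Submodule K A | IsMinimalRightIdeal K A S} =
    Submodule.span K (PA.basis '' {p : GPath G | ∀ e : G.Edge, G.s e ≠ p.rng}) := by
  apply le_antisymm
  · exact sSup_le (fun S hS => right_socle_le PA S hS)
  · rw [Submodule.span_le]
    rintro _ ⟨p, hp, rfl⟩
    have h1 : Submodule.span K {PA.basis p} ≤ sSup {S : Submodule K A | IsMinimalRightIdeal K A S} :=
      le_sSup (right_min PA p hp)
    exact h1 (Submodule.mem_span_singleton_self _)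

lemma basis_mul_mem_srcspan (p q : GPath G)
    (hq : q ∈ {p : GPath G | ∀ e : G.Edge, G.r e ≠ p.src}) :
    PA.basis p * PA.basis q ∈
      Submodule.span K (PA.basis '' {p : GPath G | ∀ e : G.Edge, G.r e ≠ p.src}) := by
  by_cases h : p.rng = q.src
  · rcases p with w | l
    · rw [PA.mul_comp _ _ h, comp_inl]
      exact Submodule.subset_span ⟨q, hq, rfl⟩
    · exact absurd h (hq _)
  · rw [PA.mul_ncomp _ _ h]
    exact Submodule.zero_mem _

lemma srcbasis_mul_mem (p q : GPath G)
    (hp : p ∈ {p : GPath G | ∀ e : G.Edge, G.r e ≠ p.src}) :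
    PA.basis p * PA.basis q ∈
      Submodule.span K (PA.basis '' {p : GPath G | ∀ e : G.Edge, G.r e ≠ p.src}) := by
  by_cases h : p.rng = q.src
  · rw [PA.mul_comp _ _ h]
    refine Submodule.subset_span ⟨p.comp q h, ?_, rfl⟩
    rw [Set.mem_setOf_eq, src_comp]
    exact hp
  · rw [PA.mul_ncomp _ _ h]
    exact Submodule.zero_mem _

lemma basis_mul_mem_rngspan (p q : GPath G)
    (hq : q ∈ {p : GPath G | ∀ e : G.Edge, G.s e ≠ p.rng}) :
    PA.basis p * PA.basis q ∈
      Submodule.span K (PA.basis '' {p : GPath G | ∀ e : G.Edge, G.s e ≠ p.rng}) := by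
  by_cases h : p.rng = q.src
  · rw [PA.mul_comp _ _ h]
    refine Submodule.subset_span ⟨p.comp q h, ?_, rfl⟩
    rw [Set.mem_setOf_eq, rng_comp]
    exact hq
  · rw [PA.mul_ncomp _ _ h]
    exact Submodule.zero_mem _

lemma mul_rngbasis_mem (p q : GPath G)
    (hp : p ∈ {p : GPath G | ∀ e : G.Edge, G.s e ≠ p.rng}) :
    PA.basis p * PA.basis q ∈
      Submodule.span K (PA.basis '' {p : GPath G | ∀ e : G.Edge, G.s e ≠ p.rng}) := by
  by_cases h : p.rng = q.src
  · rcases q with w | m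
    · rw [PA.mul_comp _ _ h]
      rcases p with u | l
      · show PA.basis (Sum.inl w : GPath G) ∈ _
        have hw : u = w := h
        subst hw
        exact Submodule.subset_span ⟨Sum.inl u, hp, rfl⟩
      · exact Submodule.subset_span ⟨Sum.inr l, hp, rfl⟩
    · exact absurd h.symm (hp _)
  · rw [PA.mul_ncomp _ _ h]
    exact Submodule.zero_mem _

lemma left_ts :
    ((Submodule.span K (PA.basis '' {p : GPath G | ∀ e : G.Edge, G.r e ≠ p.src})
        : Submodule K A) : Set A) =
      (TwoSidedIdeal.span {x : A | ∃ v : G.V, (∀ e : G.Edge, G.r e ≠ v) ∧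
        x = PA.basis (GPath.ofVertex v)} : TwoSidedIdeal A) := by
  set Tsrc : Set A := {x : A | ∃ v : G.V, (∀ e : G.Edge, G.r e ≠ v) ∧
    x = PA.basis (GPath.ofVertex v)} with hTsrc
  set Sp : Submodule K A :=
    Submodule.span K (PA.basis '' {p : GPath G | ∀ e : G.Edge, G.r e ≠ p.src}) with hSp
  ext x
  simp only [SetLike.mem_coe]
  constructor
  · intro hx
    have key : ∀ k : K, k • x ∈ TwoSidedIdeal.span Tsrc := by
      induction hx using Submodule.span_induction with
      | mem y hy =>
        intro k
        obtain ⟨p, hp, rfl⟩ := hy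
        have hbp : PA.basis p = PA.basis (ofVertex p.src) * PA.basis p := by
          rw [vertex_mul, if_pos rfl]
        have hks : k • PA.basis p = PA.basis (ofVertex p.src) * (k • PA.basis p) := by
          rw [mul_smul_comm, ← hbp]
        rw [hks]
        exact TwoSidedIdeal.mul_mem_right _ _ _
          (TwoSidedIdeal.subset_span ⟨p.src, hp, rfl⟩)
      | zero => intro k; rw [smul_zero]; exact TwoSidedIdeal.zero_mem _
      | add y z _ _ ihy ihz =>
        intro k
        rw [smul_add]
        exact TwoSidedIdeal.add_mem _ (ihy k) (ihz k)
      | smul c y _ ih =>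
        intro k
        rw [smul_smul]
        exact ih (k * c)
    simpa using key 1
  · intro hx
    have hJ := TwoSidedIdeal.mem_span_iff.mp hx
      (TwoSidedIdeal.mk' (Sp : Set A)
        Sp.zero_mem
        (fun ha hb => Sp.add_mem ha hb)
        (fun ha => Sp.neg_mem ha)
        (fun {a b} hb => mul_right_mem_of PA Sp
          (fun p q hq => basis_mul_mem_srcspan PA p q hq) a b hb)
        (fun {a b} ha => mul_left_mem_of PA Sp
          (fun p q hp => srcbasis_mul_mem PA p q hp) b a ha))
      (by
        rintro _ ⟨v, hv, rfl⟩
        rw [SetLike.mem_coe, TwoSidedIdeal.mem_mk']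
        exact Submodule.subset_span ⟨ofVertex v, hv, rfl⟩)
    rwa [TwoSidedIdeal.mem_mk'] at hJ

lemma right_ts :
    ((Submodule.span K (PA.basis '' {p : GPath G | ∀ e : G.Edge, G.s e ≠ p.rng})
        : Submodule K A) : Set A) =
      (TwoSidedIdeal.span {x : A | ∃ v : G.V, (∀ e : G.Edge, G.s e ≠ v) ∧
        x = PA.basis (GPath.ofVertex v)} : TwoSidedIdeal A) := by
  set Tsnk : Set A := {x : A | ∃ v : G.V, (∀ e : G.Edge, G.s e ≠ v) ∧
    x = PA.basis (GPath.ofVertex v)} with hTsnk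
  set Sp : Submodule K A :=
    Submodule.span K (PA.basis '' {p : GPath G | ∀ e : G.Edge, G.s e ≠ p.rng}) with hSp
  ext x
  simp only [SetLike.mem_coe]
  constructor
  · intro hx
    have key : ∀ k : K, k • x ∈ TwoSidedIdeal.span Tsnk := by
      induction hx using Submodule.span_induction with
      | mem y hy =>
        intro k
        obtain ⟨p, hp, rfl⟩ := hy
        have hbp : PA.basis p = PA.basis p * PA.basis (ofVertex p.rng) := by
          rw [mul_vertex, if_pos rfl]
        have hks : k • PA.basis p = (k • PA.basis p) * PA.basis (ofVertex p.rng) := by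
          rw [smul_mul_assoc, ← hbp]
        rw [hks]
        exact TwoSidedIdeal.mul_mem_left _ _ _
          (TwoSidedIdeal.subset_span ⟨p.rng, hp, rfl⟩)
      | zero => intro k; rw [smul_zero]; exact TwoSidedIdeal.zero_mem _
      | add y z _ _ ihy ihz =>
        intro k
        rw [smul_add]
        exact TwoSidedIdeal.add_mem _ (ihy k) (ihz k)
      | smul c y _ ih =>
        intro k
        rw [smul_smul]
        exact ih (k * c)
    simpa using key 1
  · intro hx
    have hJ := TwoSidedIdeal.mem_span_iff.mp hx
      (TwoSidedIdeal.mk' (Sp : Set A)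
        Sp.zero_mem
        (fun ha hb => Sp.add_mem ha hb)
        (fun ha => Sp.neg_mem ha)
        (fun {a b} hb => mul_right_mem_of PA Sp
          (fun p q hq => basis_mul_mem_rngspan PA p q hq) a b hb)
        (fun {a b} ha => mul_left_mem_of PA Sp
          (fun p q hp => mul_rngbasis_mem PA p q hp) b a ha))
      (by
        rintro _ ⟨v, hv, rfl⟩
        rw [SetLike.mem_coe, TwoSidedIdeal.mem_mk']
        exact Submodule.subset_span ⟨ofVertex v, hv, rfl⟩)
    rwa [TwoSidedIdeal.mem_mk'] at hJ

end Alg3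

/-- the left socle of `KE` is the span of the paths starting at sources
(the two-sided ideal generated by the sources), and the right socle is the span of the
paths ending at sinks (the two-sided ideal generated by the sinks). -/
theorem stmt11 (K : Type) [Field K] (G : DGraph)
    (A : Type) [NonUnitalRing A] [Module K A] [SMulCommClass K A A] [IsScalarTower K A A]
    (PA : PathAlgebraOn K G A) :
    (sSup {S : Submodule K A | IsMinimalLeftIdeal K A S} =
      Submodule.span K (PA.basis '' {p : GPath G | ∀ e : G.Edge, G.r e ≠ p.src})) ∧
    (((sSup {S : Submodule K A | IsMinimalLeftIdeal K A S} : Submodule K A) : Set A) =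
      (TwoSidedIdeal.span {x : A | ∃ v : G.V, (∀ e : G.Edge, G.r e ≠ v) ∧
        x = PA.basis (GPath.ofVertex v)} : TwoSidedIdeal A)) ∧
    (sSup {S : Submodule K A | IsMinimalRightIdeal K A S} =
      Submodule.span K (PA.basis '' {p : GPath G | ∀ e : G.Edge, G.s e ≠ p.rng})) ∧
    (((sSup {S : Submodule K A | IsMinimalRightIdeal K A S} : Submodule K A) : Set A) =
      (TwoSidedIdeal.span {x : A | ∃ v : G.V, (∀ e : G.Edge, G.s e ≠ v) ∧
        x = PA.basis (GPath.ofVertex v)} : TwoSidedIdeal A)) := by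
  refine ⟨left_eq PA, ?_, right_eq PA, ?_⟩
  · rw [left_eq PA]
    exact left_ts PA
  · rw [right_eq PA]
    exact right_ts PA
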